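/- The height of a hyperforest τ in the hyperforest poset equals 2|V| − |E| − 2|C|, where V is the vertex set, E the hyperedge set, and C the set of connected components. In particular a hypertree on n+1 vertices with k hyperedges has height 2n − k. -/

import Mathlib

/-- An alternating path in a hypergraph: a list of vertices and a list of hyperedges,
with each hyperedge belonging to the hypergraph and containing the two vertices around it. -/
def IsHyperPath {V : Type*} (E : Finset (Finset V)) : List V → List (Finset V) → Prop
  | [_], [] => True
  | u :: v :: vs, e :: es => e ∈ E ∧ u ∈ e ∧ v ∈ e ∧ IsHyperPath E (v :: vs) es
  | _, _ => False

/-- Two vertices are joined by a path in the hypergraph. -/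
def Reachable {V : Type*} (E : Finset (Finset V)) (u v : V) : Prop :=
  ∃ vs es, IsHyperPath E vs es ∧ vs.head? = some u ∧ vs.getLast? = some v

/-- Every pair of vertices is joined by a path. -/
def Connected {V : Type*} (E : Finset (Finset V)) : Prop := ∀ u v, Reachable E u v

/-- A nontrivial simple cycle: a closed path of length at least two with distinct
hyperedges and distinct vertices except that the endpoints are equal. -/
def HasSimpleCycle {V : Type*} (E : Finset (Finset V)) : Prop :=
  ∃ (vs : List V) (es : List (Finset V)), IsHyperPath E vs es ∧ 2 ≤ es.length ∧
    es.Nodup ∧ vs.dropLast.Nodup ∧ vs.head? = vs.getLast?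

/-- A hyperforest: hyperedges have size at least two and there are no nontrivial simple cycles. -/
def IsHyperforest {V : Type*} (E : Finset (Finset V)) : Prop :=
  (∀ e ∈ E, 2 ≤ e.card) ∧ ¬ HasSimpleCycle E

/-- A hypertree is a connected hyperforest. -/
def IsHypertree {V : Type*} (E : Finset (Finset V)) : Prop := IsHyperforest E ∧ Connected E

/-- The hyperforest poset on a fixed vertex set: σ ≤ τ iff every hyperedge of σ is
contained in some hyperedge of τ. -/
instance hyperforestPreorder {V : Type*} : Preorder {E : Finset (Finset V) // IsHyperforest E} where
  le σ τ := ∀ e ∈ σ.1, ∃ f ∈ τ.1, e ⊆ f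
  lt σ τ := (∀ e ∈ σ.1, ∃ f ∈ τ.1, e ⊆ f) ∧ ¬ (∀ e ∈ τ.1, ∃ f ∈ σ.1, e ⊆ f)
  le_refl σ e he := ⟨e, he, subset_rfl⟩
  le_trans σ τ ρ h1 h2 e he := by
    obtain ⟨f, hf, hef⟩ := h1 e he
    obtain ⟨g, hg, hfg⟩ := h2 f hf
    exact ⟨g, hg, hef.trans hfg⟩
  lt_iff_le_not_ge σ τ := Iff.rfl


namespace HF
variable {V : Type*}

theorem path_length {E : Finset (Finset V)} : ∀ (vs : List V) (es : List (Finset V)),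
    IsHyperPath E vs es → vs.length = es.length + 1 := by
  intro vs
  induction vs with
  | nil => intro es h; exact absurd h (by cases es <;> simp [IsHyperPath])
  | cons u vs ih =>
    intro es h
    match vs, es with
    | [], [] => rfl
    | [], e :: es => exact absurd h (by simp [IsHyperPath])
    | v :: vs, [] => exact absurd h (by simp [IsHyperPath])
    | v :: vs, e :: es =>
      have := ih es h.2.2.2
      simp only [List.length_cons] at *
      omega

theorem path_ne_nil {E : Finset (Finset V)} {vs : List V} {es : List (Finset V)}
    (h : IsHyperPath E vs es) : vs ≠ [] := by
  intro hn; subst hn; exact absurd h (by cases es <;> simp [IsHyperPath])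

theorem path_edges_mem {E : Finset (Finset V)} : ∀ (vs : List V) (es : List (Finset V)),
    IsHyperPath E vs es → ∀ f ∈ es, f ∈ E := by
  intro vs
  induction vs with
  | nil => intro es h; exact absurd h (by cases es <;> simp [IsHyperPath])
  | cons u vs ih =>
    intro es h
    match vs, es with
    | [], [] => simp
    | [], e :: es => exact absurd h (by simp [IsHyperPath])
    | v :: vs, [] => simp
    | v :: vs, e :: es =>
      intro f hf
      rcases List.mem_cons.1 hf with rfl | hf
      · exact h.1
      · exact ih es h.2.2.2 f hf

theorem path_change {E E' : Finset (Finset V)} {vs : List V} : ∀ {es : List (Finset V)},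
    IsHyperPath E vs es → (∀ f ∈ es, f ∈ E') → IsHyperPath E' vs es := by
  induction vs with
  | nil => intro es h _; exact absurd h (by cases es <;> simp [IsHyperPath])
  | cons u vs ih =>
    intro es h hm
    match vs, es with
    | [], [] => trivial
    | [], e :: es => exact absurd h (by simp [IsHyperPath])
    | v :: vs, [] => exact absurd h (by simp [IsHyperPath])
    | v :: vs, e :: es =>
      exact ⟨hm e (by simp), h.2.1, h.2.2.1, ih h.2.2.2 (fun f hf => hm f (by simp [hf]))⟩

theorem path_mono {E E' : Finset (Finset V)} (hEE : E ⊆ E') {vs : List V} {es : List (Finset V)}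
    (h : IsHyperPath E vs es) : IsHyperPath E' vs es :=
  path_change h (fun f hf => hEE (path_edges_mem _ _ h f hf))

/-- replace each edge by a superset edge -/
theorem path_map {E E' : Finset (Finset V)} (ψ : Finset V → Finset V)
    (hψ : ∀ e ∈ E, ψ e ∈ E' ∧ e ⊆ ψ e) {vs : List V} : ∀ {es : List (Finset V)},
    IsHyperPath E vs es → IsHyperPath E' vs (es.map ψ) := by
  induction vs with
  | nil => intro es h; exact absurd h (by cases es <;> simp [IsHyperPath])
  | cons u vs ih =>
    intro es h
    match vs, es with
    | [], [] => trivial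
    | [], e :: es => exact absurd h (by simp [IsHyperPath])
    | v :: vs, [] => exact absurd h (by simp [IsHyperPath])
    | v :: vs, e :: es =>
      obtain ⟨h1, h2⟩ := hψ e h.1
      exact ⟨h1, h2 h.2.1, h2 h.2.2.1, ih h.2.2.2⟩

theorem path_append {E : Finset (Finset V)} : ∀ (xs : List V) (a : V) (ys : List V)
    (es1 es2 : List (Finset V)),
    IsHyperPath E (xs ++ [a]) es1 → IsHyperPath E (a :: ys) es2 →
    IsHyperPath E (xs ++ a :: ys) (es1 ++ es2)
  | [], a, ys, es1, es2, h1, h2 => by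
      have : es1 = [] := by
        have := path_length _ _ h1; simpa using this
      subst this; simpa using h2
  | [u], a, ys, es1, es2, h1, h2 => by
      match es1 with
      | [] => exact absurd h1 (by simp [IsHyperPath])
      | e :: es1' =>
        have h1' : e ∈ E ∧ u ∈ e ∧ a ∈ e ∧ IsHyperPath E [a] es1' := h1
        have : es1' = [] := by
          have := path_length _ _ h1'.2.2.2; simpa using this
        subst this
        exact ⟨h1'.1, h1'.2.1, h1'.2.2.1, h2⟩
  | u :: v :: xs, a, ys, es1, es2, h1, h2 => by
      match es1 with
      | [] => exact absurd h1 (by simp [IsHyperPath])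
      | e :: es1' =>
        exact ⟨h1.1, h1.2.1, h1.2.2.1, path_append (v :: xs) a ys es1' es2 h1.2.2.2 h2⟩

theorem path_split_vertex {E : Finset (Finset V)} : ∀ (xs : List V) (a : V) (ys : List V)
    (es : List (Finset V)), IsHyperPath E (xs ++ a :: ys) es →
    ∃ es1 es2, es = es1 ++ es2 ∧ es1.length = xs.length ∧
      IsHyperPath E (xs ++ [a]) es1 ∧ IsHyperPath E (a :: ys) es2
  | [], a, ys, es, h => ⟨[], es, rfl, rfl, trivial, h⟩
  | [u], a, ys, es, h => by
      match es with
      | [] => exact absurd h (by simp [IsHyperPath])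
      | e :: es' =>
        exact ⟨[e], es', rfl, rfl, ⟨h.1, h.2.1, h.2.2.1, trivial⟩, h.2.2.2⟩
  | u :: v :: xs, a, ys, es, h => by
      match es with
      | [] => exact absurd h (by simp [IsHyperPath])
      | e :: es' =>
        obtain ⟨es1, es2, rfl, hlen, hp1, hp2⟩ := path_split_vertex (v :: xs) a ys es' h.2.2.2
        exact ⟨e :: es1, es2, rfl, by simp [hlen], ⟨h.1, h.2.1, h.2.2.1, hp1⟩, hp2⟩

theorem path_split_edge {E : Finset (Finset V)} : ∀ (ps : List (Finset V)) (f : Finset V)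
    (qs : List (Finset V)) (vs : List V), IsHyperPath E vs (ps ++ f :: qs) →
    ∃ xs u v ys, vs = xs ++ u :: v :: ys ∧ xs.length = ps.length ∧
      IsHyperPath E (xs ++ [u]) ps ∧ f ∈ E ∧ u ∈ f ∧ v ∈ f ∧ IsHyperPath E (v :: ys) qs
  | [], f, qs, vs, h => by
      match vs with
      | [] => exact absurd h (by simp [IsHyperPath])
      | [x] => exact absurd h (by simp [IsHyperPath])
      | u :: v :: ys =>
        exact ⟨[], u, v, ys, rfl, rfl, trivial, h.1, h.2.1, h.2.2.1, h.2.2.2⟩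
  | p :: ps, f, qs, vs, h => by
      match vs with
      | [] => exact absurd h (by simp [IsHyperPath])
      | [x] => exact absurd h (by simp [IsHyperPath])
      | u :: v :: ys =>
        obtain ⟨xs2, u2, v2, ys2, heq, hlen, hp1, hf, huf, hvf, hp2⟩ :=
          path_split_edge ps f qs (v :: ys) h.2.2.2
        refine ⟨u :: xs2, u2, v2, ys2, by rw [heq]; rfl, by simp [hlen], ?_, hf, huf, hvf, hp2⟩
        match xs2, heq with
        | [], heq =>
          have hv : v = u2 := by simpa using congrArg List.head? heq
          have hps : ps = [] := by simpa using hlen.symm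
          subst hv; subst hps
          exact ⟨h.1, h.2.1, h.2.2.1, trivial⟩
        | w :: xs2', heq =>
          have : v = w := by simpa using congrArg List.head? heq
          subst this
          exact ⟨h.1, h.2.1, h.2.2.1, hp1⟩

theorem head?_append_cons {α : Type*} (xs : List α) (a : α) (ys : List α) :
    (xs ++ a :: ys).head? = (xs ++ [a]).head? := by cases xs <;> simp

theorem path_reverse {E : Finset (Finset V)} : ∀ (vs : List V) (es : List (Finset V)),
    IsHyperPath E vs es → IsHyperPath E vs.reverse es.reverse
  | [u], [], _ => trivial
  | [], es, h => absurd h (by cases es <;> simp [IsHyperPath])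
  | [u], e :: es, h => absurd h (by simp [IsHyperPath])
  | u :: v :: vs, [], h => absurd h (by simp [IsHyperPath])
  | u :: v :: vs, e :: es, h => by
      have ih := path_reverse (v :: vs) es h.2.2.2
      rw [List.reverse_cons] at ih
      have step : IsHyperPath E (v :: [u]) [e] := ⟨h.1, h.2.2.1, h.2.1, trivial⟩
      have := path_append vs.reverse v [u] es.reverse [e] ih step
      simpa using this

theorem reach_refl {E : Finset (Finset V)} (u : V) : Reachable E u u :=
  ⟨[u], [], trivial, rfl, rfl⟩

theorem reach_symm {E : Finset (Finset V)} {u v : V} (h : Reachable E u v) :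
    Reachable E v u := by
  obtain ⟨vs, es, hp, hh, hl⟩ := h
  exact ⟨vs.reverse, es.reverse, path_reverse vs es hp, by simpa using hl, by simpa using hh⟩

theorem reach_trans {E : Finset (Finset V)} {u v w : V} (h1 : Reachable E u v)
    (h2 : Reachable E v w) : Reachable E u w := by
  obtain ⟨vs1, es1, hp1, hh1, hl1⟩ := h1
  obtain ⟨vs2, es2, hp2, hh2, hl2⟩ := h2
  obtain ⟨t2, rfl⟩ : ∃ t, vs2 = v :: t := by
    cases vs2 with
    | nil => simp at hh2
    | cons x t => exact ⟨t, by simpa using congrArg (List.cons · t) (by simpa using hh2 : x = v)⟩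
  have hvs1 : vs1.dropLast ++ [v] = vs1 := List.dropLast_append_getLast? v hl1
  have hp1' : IsHyperPath E (vs1.dropLast ++ [v]) es1 := by rw [hvs1]; exact hp1
  have hglue := path_append vs1.dropLast v t2 es1 es2 hp1' hp2
  refine ⟨vs1.dropLast ++ v :: t2, es1 ++ es2, hglue, ?_, ?_⟩
  · rw [head?_append_cons, hvs1]; exact hh1
  · rw [List.getLast?_append_cons]; exact hl2

theorem exists_dup {α : Type*} : ∀ (l : List α), ¬ l.Nodup →
    ∃ xs a ys, l = xs ++ a :: ys ∧ a ∈ ys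
  | [], h => absurd List.nodup_nil h
  | a :: l, h => by
      by_cases ha : a ∈ l
      · exact ⟨[], a, l, rfl, ha⟩
      · have : ¬ l.Nodup := fun hl => h (List.nodup_cons.2 ⟨ha, hl⟩)
        obtain ⟨xs, b, ys, rfl, hb⟩ := exists_dup l this
        exact ⟨a :: xs, b, ys, rfl, hb⟩

theorem path_simplify {E : Finset (Finset V)} : ∀ (n : ℕ) (vs : List V) (es : List (Finset V)),
    es.length = n → IsHyperPath E vs es →
    ∃ vs' es', IsHyperPath E vs' es' ∧ vs'.head? = vs.head? ∧ vs'.getLast? = vs.getLast? ∧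
      vs'.Nodup ∧ es'.Nodup ∧ ∀ f ∈ es', f ∈ es := by
  intro n
  induction n using Nat.strong_induction_on with
  | _ n IH =>
  intro vs es hn hp
  by_cases hvs : vs.Nodup
  · by_cases hes : es.Nodup
    · exact ⟨vs, es, hp, rfl, rfl, hvs, hes, fun f hf => hf⟩
    · obtain ⟨ps, f, qs, rfl, hfqs⟩ := exists_dup es hes
      obtain ⟨qs1, qs2, rfl⟩ := List.append_of_mem hfqs
      obtain ⟨xs, u, v, ys, rfl, hlen1, hp1, hfE, huf, hvf, hp2⟩ := path_split_edge ps f _ vs hp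
      obtain ⟨xs2, p, q, ys2, heq2, hlen2, hp2a, hfE2, hpf, hqf, hp2b⟩ :=
        path_split_edge qs1 f qs2 _ hp2
      have step : IsHyperPath E (u :: q :: ys2) (f :: qs2) := ⟨hfE, huf, hqf, hp2b⟩
      have hnew : IsHyperPath E (xs ++ u :: q :: ys2) (ps ++ f :: qs2) :=
        path_append xs u (q :: ys2) ps (f :: qs2) hp1 step
      obtain ⟨vs', es', h1, h2, h3, h4, h5, h6⟩ :=
        IH (ps ++ f :: qs2).length (by subst hn; simp) _ _ rfl hnew
      refine ⟨vs', es', h1, ?_, ?_, h4, h5, ?_⟩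
      · rw [h2, head?_append_cons xs u (q :: ys2), head?_append_cons xs u (v :: ys)]
      · rw [h3, List.getLast?_append_cons xs u (q :: ys2),
          List.getLast?_append_cons xs u (v :: ys),
          show u :: q :: ys2 = [u] ++ q :: ys2 from rfl, List.getLast?_append_cons [u] q ys2,
          show u :: v :: ys = [u] ++ v :: ys from rfl, List.getLast?_append_cons [u] v ys,
          heq2, List.getLast?_append_cons xs2 p (q :: ys2),
          show p :: q :: ys2 = [p] ++ q :: ys2 from rfl, List.getLast?_append_cons [p] q ys2]
      · intro g hg
        have := h6 g hg
        simp only [List.mem_append, List.mem_cons] at this ⊢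
        tauto
  · obtain ⟨xs, a, ys, rfl, hays⟩ := exists_dup vs hvs
    obtain ⟨ys1, ys2, rfl⟩ := List.append_of_mem hays
    obtain ⟨es1, es2, rfl, hlen1, hp1, hp2⟩ := path_split_vertex xs a _ _ hp
    have hp2' : IsHyperPath E ((a :: ys1) ++ a :: ys2) es2 := hp2
    obtain ⟨es3, es4, rfl, hlen3, hp3, hp4⟩ := path_split_vertex (a :: ys1) a ys2 es2 hp2'
    have hnew : IsHyperPath E (xs ++ a :: ys2) (es1 ++ es4) :=
      path_append xs a ys2 es1 es4 hp1 hp4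
    obtain ⟨vs', es', h1, h2, h3, h4, h5, h6⟩ :=
      IH (es1 ++ es4).length (by subst hn; simp [hlen3]) _ _ rfl hnew
    refine ⟨vs', es', h1, ?_, ?_, h4, h5, ?_⟩
    · rw [h2, head?_append_cons xs a ys2, head?_append_cons xs a (ys1 ++ a :: ys2)]
    · rw [h3, List.getLast?_append_cons xs a ys2,
        List.getLast?_append_cons xs a (ys1 ++ a :: ys2),
        show a :: (ys1 ++ a :: ys2) = (a :: ys1) ++ a :: ys2 from rfl,
        List.getLast?_append_cons (a :: ys1) a ys2]
    · intro g hg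
      have := h6 g hg
      simp only [List.mem_append, List.mem_cons] at this ⊢
      tauto

theorem reach_simplify {E : Finset (Finset V)} {u v : V} (h : Reachable E u v) :
    ∃ vs es, IsHyperPath E vs es ∧ vs.head? = some u ∧ vs.getLast? = some v ∧
      vs.Nodup ∧ es.Nodup := by
  obtain ⟨vs, es, hp, hh, hl⟩ := h
  obtain ⟨vs', es', h1, h2, h3, h4, h5, _⟩ := path_simplify es.length vs es rfl hp
  exact ⟨vs', es', h1, h2.trans hh, h3.trans hl, h4, h5⟩

theorem reach_mono {E E' : Finset (Finset V)} (hEE : ∀ e ∈ E, ∃ f ∈ E', e ⊆ f) {u v : V}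
    (h : Reachable E u v) : Reachable E' u v := by
  classical
  obtain ⟨vs, es, hp, hh, hl⟩ := h
  set ψ : Finset V → Finset V := fun e => if h : ∃ f ∈ E', e ⊆ f then h.choose else ∅ with hψdef
  have hψ : ∀ e ∈ E, ψ e ∈ E' ∧ e ⊆ ψ e := by
    intro e he
    have hex : ∃ f ∈ E', e ⊆ f := hEE e he
    simp only [hψdef, dif_pos hex]
    exact ⟨hex.choose_spec.1, hex.choose_spec.2⟩
  exact ⟨vs, es.map ψ, path_map ψ hψ hp, hh, hl⟩

theorem reach_mono' {E E' : Finset (Finset V)} (hEE : E ⊆ E') {u v : V}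
    (h : Reachable E u v) : Reachable E' u v := by
  obtain ⟨vs, es, hp, hh, hl⟩ := h
  exact ⟨vs, es, path_mono hEE hp, hh, hl⟩

theorem reach_edge {E : Finset (Finset V)} {e : Finset V} (he : e ∈ E) {u v : V}
    (hu : u ∈ e) (hv : v ∈ e) : Reachable E u v := by
  rcases eq_or_ne u v with rfl | huv
  · exact reach_refl u
  · exact ⟨[u, v], [e], ⟨he, hu, hv, trivial⟩, rfl, rfl⟩

def Acyclic [DecidableEq V] (E : Finset (Finset V)) : Prop :=
  ∀ e ∈ E, ∀ u v, u ∈ e → v ∈ e → u ≠ v → ¬ Reachable (E.erase e) u v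

theorem cycle_of_reach [DecidableEq V] {E : Finset (Finset V)} {e : Finset V} {u v : V}
    (he : e ∈ E) (hu : u ∈ e) (hv : v ∈ e) (huv : u ≠ v)
    (hr : Reachable (E.erase e) u v) : HasSimpleCycle E := by
  obtain ⟨vs, es, hp, hh, hl, hvn, hen⟩ := reach_simplify hr
  have hes_mem : ∀ f ∈ es, f ∈ E.erase e := path_edges_mem _ _ hp
  have hlen := path_length _ _ hp
  have hes_ne : es ≠ [] := by
    rintro rfl
    obtain ⟨x, rfl⟩ : ∃ x, vs = [x] := by
      match vs, hlen with
      | [x], _ => exact ⟨x, rfl⟩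
    simp at hh hl
    exact huv (hh.symm.trans hl)
  have hvs_eq : vs.dropLast ++ [v] = vs := List.dropLast_append_getLast? v hl
  have hpE : IsHyperPath E (vs.dropLast ++ [v]) es := by
    rw [hvs_eq]; exact path_mono (Finset.erase_subset e E) hp
  have hstep : IsHyperPath E (v :: [u]) [e] := ⟨he, hv, hu, trivial⟩
  have hcyc : IsHyperPath E (vs.dropLast ++ v :: [u]) (es ++ [e]) :=
    path_append _ v [u] es [e] hpE hstep
  have hvseq2 : vs.dropLast ++ v :: [u] = vs ++ [u] := by
    rw [show v :: [u] = [v] ++ [u] from rfl, ← List.append_assoc, hvs_eq]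
  rw [hvseq2] at hcyc
  refine ⟨vs ++ [u], es ++ [e], hcyc, ?_, ?_, ?_, ?_⟩
  · have : 1 ≤ es.length := by
      cases es with
      | nil => exact absurd rfl hes_ne
      | cons a l => simp
    simp; omega
  · rw [List.nodup_append]
    refine ⟨hen, List.nodup_singleton e, ?_⟩
    intro f hf
    simp only [List.mem_singleton]
    exact fun b hb hfb => (Finset.notMem_erase e E) (by rw [hb] at hfb; rw [hfb] at hf; exact hes_mem e hf)
  · rw [List.dropLast_concat]; exact hvn
  · obtain ⟨t, rfl⟩ : ∃ t, vs = u :: t := ⟨vs.tail, List.eq_cons_of_mem_head? hh⟩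
    rw [List.getLast?_concat]
    rfl

theorem notAcyclic_of_cycle [DecidableEq V] {E : Finset (Finset V)}
    (h : HasSimpleCycle E) :
    ∃ e ∈ E, ∃ u v, u ∈ e ∧ v ∈ e ∧ u ≠ v ∧ Reachable (E.erase e) u v := by
  obtain ⟨vs, es, hp, hlen2, hen, hdn, hcyc⟩ := h
  have hlen := path_length _ _ hp
  obtain ⟨e, es', rfl⟩ : ∃ e es', es = e :: es' := by
    cases es with
    | nil => simp at hlen2
    | cons e es' => exact ⟨e, es', rfl⟩
  obtain ⟨x, y, vs', rfl⟩ : ∃ x y vs', vs = x :: y :: vs' := by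
    match vs, hlen with
    | [], hlen => exact absurd hlen (by simp)
    | [x], hlen => exact absurd hlen (by simp)
    | x :: y :: vs', _ => exact ⟨x, y, vs', rfl⟩
  have hp := hp
  have hvs'ne : vs' ≠ [] := by
    rintro rfl
    simp only [List.length_cons, List.length_nil] at hlen hlen2
    omega
  have hdl : (x :: y :: vs').dropLast = x :: y :: vs'.dropLast := by
    cases vs' with
    | nil => exact absurd rfl hvs'ne
    | cons w t => simp
  rw [hdl] at hdn
  have hxy : x ≠ y := by
    intro h'
    subst h'
    exact (List.nodup_cons.1 hdn).1 (by simp)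
  have hl' : (y :: vs').getLast? = some x := by
    have : (x :: y :: vs').getLast? = some x := hcyc ▸ rfl
    rwa [show x :: y :: vs' = [x] ++ y :: vs' from rfl, List.getLast?_append_cons] at this
  have hpath : IsHyperPath (E.erase e) (y :: vs') es' := by
    refine path_change hp.2.2.2 ?_
    intro f hf
    refine Finset.mem_erase.2 ⟨?_, path_edges_mem _ _ hp.2.2.2 f hf⟩
    intro hfe
    subst hfe
    exact (List.nodup_cons.1 hen).1 hf
  exact ⟨e, hp.1, x, y, hp.2.1, hp.2.2.1, hxy,
    reach_symm ⟨y :: vs', es', hpath, rfl, hl'⟩⟩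

theorem acyclic_of_forest [DecidableEq V] {E : Finset (Finset V)}
    (h : ¬ HasSimpleCycle E) : Acyclic E :=
  fun e he u v hu hv huv hr => h (cycle_of_reach he hu hv huv hr)

theorem no_cycle_of_acyclic [DecidableEq V] {E : Finset (Finset V)}
    (h : Acyclic E) : ¬ HasSimpleCycle E := by
  intro hc
  obtain ⟨e, he, u, v, hu, hv, huv, hr⟩ := notAcyclic_of_cycle hc
  exact h e he u v hu hv huv hr

theorem reach_insert_aux [DecidableEq V] {E : Finset (Finset V)} {e : Finset V} :
    ∀ (vs : List V) (es : List (Finset V)), IsHyperPath (insert e E) vs es →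
    ∀ u v, vs.head? = some u → vs.getLast? = some v →
    Reachable E u v ∨ ((∃ a ∈ e, Reachable E u a) ∧ ∃ b ∈ e, Reachable E v b)
  | [x], [], _, u, v, hh, hl => by
      obtain rfl : u = x := by simpa using hh.symm
      obtain rfl : v = u := by simpa using hl.symm
      exact Or.inl (reach_refl v)
  | [], es, h, _, _, _, _ => absurd h (by cases es <;> simp [IsHyperPath])
  | [x], f :: es, h, _, _, _, _ => absurd h (by simp [IsHyperPath])
  | x :: y :: vs, [], h, _, _, _, _ => absurd h (by simp [IsHyperPath])
  | x :: y :: vs, f :: es, h, u, v, hh, hl => by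
      obtain rfl : u = x := by simpa using hh.symm
      have hl' : (y :: vs).getLast? = some v := by
        rw [show u :: y :: vs = [u] ++ y :: vs from rfl, List.getLast?_append_cons] at hl
        exact hl
      have ih := reach_insert_aux (y :: vs) es h.2.2.2 y v rfl hl'
      rcases Finset.mem_insert.1 h.1 with rfl | hfE
      · right
        refine ⟨⟨u, h.2.1, reach_refl u⟩, ?_⟩
        rcases ih with hyv | ⟨_, hb⟩
        · exact ⟨y, h.2.2.1, reach_symm hyv⟩
        · exact hb
      · have step : Reachable E u y := reach_edge hfE h.2.1 h.2.2.1
        rcases ih with hyv | ⟨⟨a, ha, hya⟩, hb⟩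
        · exact Or.inl (reach_trans step hyv)
        · exact Or.inr ⟨⟨a, ha, reach_trans step hya⟩, hb⟩

theorem reach_insert_iff [DecidableEq V] {E : Finset (Finset V)} {e : Finset V} {u v : V} :
    Reachable (insert e E) u v ↔
    Reachable E u v ∨ ((∃ a ∈ e, Reachable E u a) ∧ ∃ b ∈ e, Reachable E v b) := by
  constructor
  · rintro ⟨vs, es, hp, hh, hl⟩
    exact reach_insert_aux vs es hp u v hh hl
  · rintro (h | ⟨⟨a, ha, hua⟩, ⟨b, hb, hvb⟩⟩)
    · exact reach_mono' (Finset.subset_insert e E) h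
    · have h1 : Reachable (insert e E) u a := reach_mono' (Finset.subset_insert e E) hua
      have h2 : Reachable (insert e E) a b := reach_edge (Finset.mem_insert_self e E) ha hb
      have h3 : Reachable (insert e E) b v :=
        reach_symm (reach_mono' (Finset.subset_insert e E) hvb)
      exact reach_trans (reach_trans h1 h2) h3

open Classical in
noncomputable def cls [Fintype V] (E : Finset (Finset V)) (v : V) : Finset V :=
  Finset.univ.filter (fun w => Reachable E v w)

noncomputable def comp [Fintype V] (E : Finset (Finset V)) : Finset (Finset V) :=
  @Finset.image _ _ (Classical.decEq _) (cls E) Finset.univ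

theorem mem_cls [Fintype V] {E : Finset (Finset V)} {v w : V} :
    w ∈ cls E v ↔ Reachable E v w := by
  simp [cls]

theorem cls_self [Fintype V] {E : Finset (Finset V)} (v : V) : v ∈ cls E v :=
  mem_cls.2 (reach_refl v)

theorem cls_eq_of_reach [Fintype V] {E : Finset (Finset V)} {u v : V}
    (h : Reachable E u v) : cls E u = cls E v := by
  ext w
  simp only [mem_cls]
  exact ⟨fun h' => reach_trans (reach_symm h) h', fun h' => reach_trans h h'⟩

theorem reach_of_cls_eq [Fintype V] {E : Finset (Finset V)} {u v : V}
    (h : cls E u = cls E v) : Reachable E u v := by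
  have : v ∈ cls E u := h ▸ cls_self v
  exact mem_cls.1 this

theorem mem_comp [Fintype V] {E : Finset (Finset V)} {s : Finset V} :
    s ∈ comp E ↔ ∃ v, cls E v = s := by
  rw [comp, @Finset.mem_image _ _ (Classical.decEq _)]
  simp

theorem cls_mem_comp [Fintype V] {E : Finset (Finset V)} (v : V) : cls E v ∈ comp E :=
  mem_comp.2 ⟨v, rfl⟩

theorem card_quot_eq_comp [Fintype V] (E : Finset (Finset V)) :
    Nat.card (Quot (Reachable E)) = (comp E).card := by
  classical
  have hbij : Function.Bijective
      (Quot.lift (fun v => (⟨cls E v, cls_mem_comp v⟩ : {s // s ∈ comp E}))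
        (fun u v h => by simpa using cls_eq_of_reach h)) := by
    constructor
    · rintro ⟨u⟩ ⟨v⟩ h
      simp only [Subtype.mk.injEq] at h
      exact Quot.sound (reach_of_cls_eq h)
    · rintro ⟨s, hs⟩
      obtain ⟨v, rfl⟩ := mem_comp.1 hs
      exact ⟨Quot.mk _ v, rfl⟩
  rw [Nat.card_eq_of_bijective _ hbij, Nat.card_eq_finsetCard]

theorem reach_empty {u v : V} (h : Reachable (∅ : Finset (Finset V)) u v) : u = v := by
  obtain ⟨vs, es, hp, hh, hl⟩ := h
  match vs, es, hp with
  | [x], [], _ =>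
    have h1 : x = u := by simpa using hh
    have h2 : x = v := by simpa using hl
    exact h1 ▸ h2
  | x :: y :: vs, e :: es, hp => exact absurd hp.1 (by simp)

theorem comp_empty_card [Fintype V] [DecidableEq V] :
    (comp (∅ : Finset (Finset V))).card = Fintype.card V := by
  have hcls : ∀ v : V, cls (∅ : Finset (Finset V)) v = {v} := by
    intro v
    ext w
    simp only [mem_cls, Finset.mem_singleton]
    exact ⟨fun h => (reach_empty h).symm, fun h => by rw [h]; exact reach_refl v⟩
  have heq : comp (∅ : Finset (Finset V)) = Finset.univ.image (fun v => ({v} : Finset V)) := by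
    ext s
    rw [mem_comp, Finset.mem_image]
    constructor
    · rintro ⟨v, rfl⟩
      exact ⟨v, Finset.mem_univ v, (hcls v).symm⟩
    · rintro ⟨v, _, rfl⟩
      exact ⟨v, hcls v⟩
  rw [heq, Finset.card_image_of_injective _ (fun a b h => by simpa using h), Finset.card_univ]

theorem comp_erase_card [Fintype V] [DecidableEq V] {E : Finset (Finset V)} {e : Finset V}
    (he : e ∈ E) (hene : e.Nonempty)
    (hsep : ∀ u ∈ e, ∀ v ∈ e, u ≠ v → ¬ Reachable (E.erase e) u v) :
    (comp (E.erase e)).card + 1 = (comp E).card + e.card := by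
  classical
  set E₀ := E.erase e with hE₀
  have hins : insert e E₀ = E := Finset.insert_erase he
  have hR : ∀ u v, Reachable E u v ↔
      (Reachable E₀ u v ∨ ((∃ a ∈ e, Reachable E₀ u a) ∧ ∃ b ∈ e, Reachable E₀ v b)) := by
    intro u v
    rw [← hins]
    exact reach_insert_iff
  obtain ⟨a₀, ha₀⟩ := hene
  set A := (comp E₀).filter (fun s => ∀ a ∈ e, a ∉ s) with hA
  -- classes avoiding e have equal cls
  have hsame : ∀ v : V, (∀ a ∈ e, ¬ Reachable E₀ v a) → cls E v = cls E₀ v := by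
    intro v hv
    ext w
    simp only [mem_cls]
    rw [hR v w]
    constructor
    · rintro (h | ⟨⟨a, ha, hva⟩, _⟩)
      · exact h
      · exact absurd hva (hv a ha)
    · exact Or.inl
  -- decomposition of comp E₀
  have hdecomp0 : comp E₀ = A ∪ e.image (cls E₀) := by
    ext s
    simp only [hA, Finset.mem_union, Finset.mem_filter, Finset.mem_image]
    constructor
    · intro hs
      by_cases hae : ∀ a ∈ e, a ∉ s
      · exact Or.inl ⟨hs, hae⟩
      · push_neg at hae
        obtain ⟨a, ha, has⟩ := hae
        obtain ⟨v, rfl⟩ := mem_comp.1 hs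
        exact Or.inr ⟨a, ha, (cls_eq_of_reach (mem_cls.1 has)).symm⟩
    · rintro (⟨hs, _⟩ | ⟨a, ha, rfl⟩)
      · exact hs
      · exact cls_mem_comp a
  have hdisj0 : Disjoint A (e.image (cls E₀)) := by
    rw [Finset.disjoint_right]
    rintro s hs hsA
    obtain ⟨a, ha, rfl⟩ := Finset.mem_image.1 hs
    exact (Finset.mem_filter.1 hsA).2 a ha (cls_self a)
  have himgcard : (e.image (cls E₀)).card = e.card := by
    apply Finset.card_image_of_injOn
    intro a ha b hb hab
    by_contra hne
    exact hsep a ha b hb hne (reach_of_cls_eq hab)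
  -- decomposition of comp E
  have he_reach : ∀ a ∈ e, Reachable E a a₀ := fun a ha => reach_edge he ha ha₀
  have hdecomp1 : comp E = A ∪ {cls E a₀} := by
    ext s
    simp only [Finset.mem_union, Finset.mem_singleton, hA, Finset.mem_filter]
    constructor
    · intro hs
      obtain ⟨v, rfl⟩ := mem_comp.1 hs
      by_cases hv : ∀ a ∈ e, ¬ Reachable E₀ v a
      · refine Or.inl ⟨?_, ?_⟩
        · rw [hsame v hv]; exact cls_mem_comp v
        · intro a ha has
          rw [hsame v hv] at has
          have : Reachable E₀ v a := mem_cls.1 has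
          exact hv a ha this
      · push_neg at hv
        obtain ⟨a, ha, hva⟩ := hv
        refine Or.inr ?_
        have h1 : Reachable E v a := reach_mono' (Finset.erase_subset e E) hva
        exact cls_eq_of_reach (reach_trans h1 (he_reach a ha))
    · rintro (⟨hs, hae⟩ | rfl)
      · obtain ⟨v, rfl⟩ := mem_comp.1 hs
        have hv : ∀ a ∈ e, ¬ Reachable E₀ v a := by
          intro a ha hva
          exact hae a ha (mem_cls.2 hva)
        rw [← hsame v hv]
        exact cls_mem_comp v
      · exact cls_mem_comp a₀
  have hdisj1 : Disjoint A ({cls E a₀} : Finset (Finset V)) := by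
    rw [Finset.disjoint_right]
    rintro s hs hsA
    rw [Finset.mem_singleton] at hs
    subst hs
    exact (Finset.mem_filter.1 hsA).2 a₀ ha₀ (cls_self a₀)
  have h0 : (comp E₀).card = A.card + e.card := by
    rw [hdecomp0, Finset.card_union_of_disjoint hdisj0, himgcard]
  have h1 : (comp E).card = A.card + 1 := by
    rw [hdecomp1, Finset.card_union_of_disjoint hdisj1, Finset.card_singleton]
  omega

theorem acyclic_mono [DecidableEq V] {E E' : Finset (Finset V)} (hsub : E' ⊆ E)
    (h : Acyclic E) : Acyclic E' := by
  intro f hf u v hu hv huv hr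
  exact h f (hsub hf) u v hu hv huv
    (reach_mono' (Finset.erase_subset_erase f hsub) hr)

theorem forest_count [Fintype V] [DecidableEq V] : ∀ (n : ℕ) (E : Finset (Finset V)),
    E.card = n → Acyclic E → (∀ e ∈ E, e.Nonempty) →
    ∑ e ∈ E, e.card + (comp E).card = Fintype.card V + E.card := by
  intro n
  induction n with
  | zero =>
    intro E hcard _ _
    obtain rfl : E = ∅ := Finset.card_eq_zero.1 hcard
    simp [comp_empty_card]
  | succ n IH =>
    intro E hcard hacyc hne
    obtain ⟨e, he⟩ : E.Nonempty := Finset.card_pos.1 (by omega)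
    have hstep := comp_erase_card he (hne e he) (fun u hu v hv huv => hacyc e he u v hu hv huv)
    have hIH := IH (E.erase e) (by rw [Finset.card_erase_of_mem he]; omega)
      (acyclic_mono (Finset.erase_subset e E) hacyc)
      (fun f hf => hne f (Finset.mem_of_mem_erase hf))
    have hsum : ∑ f ∈ E.erase e, f.card + e.card = ∑ f ∈ E, f.card :=
      Finset.sum_erase_add E _ he
    have hcarderase : (E.erase e).card = n := by rw [Finset.card_erase_of_mem he]; omega
    omega

theorem path_map_emb {W : Type*} (g : V ↪ W) {E : Finset (Finset V)} {E' : Finset (Finset W)}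
    (hg : ∀ e ∈ E, e.map g ∈ E') :
    ∀ (vs : List V) (es : List (Finset V)), IsHyperPath E vs es →
      IsHyperPath E' (vs.map g) (es.map (Finset.map g))
  | [x], [], _ => trivial
  | [], es, h => absurd h (by cases es <;> simp [IsHyperPath])
  | [x], e :: es, h => absurd h (by simp [IsHyperPath])
  | x :: y :: vs, [], h => absurd h (by simp [IsHyperPath])
  | x :: y :: vs, e :: es, h =>
      ⟨hg e h.1, Finset.mem_map_of_mem g h.2.1, Finset.mem_map_of_mem g h.2.2.1,
        path_map_emb g hg (y :: vs) es h.2.2.2⟩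

theorem cycle_map_emb {W : Type*} (g : V ↪ W) {E : Finset (Finset V)} {E' : Finset (Finset W)}
    (hg : ∀ e ∈ E, e.map g ∈ E') (h : HasSimpleCycle E) : HasSimpleCycle E' := by
  obtain ⟨vs, es, hp, hlen, hen, hdn, hcyc⟩ := h
  refine ⟨vs.map g, es.map (Finset.map g), path_map_emb g hg vs es hp, by simpa using hlen,
    hen.map (Finset.map_injective g), ?_, ?_⟩
  · rw [← List.map_dropLast]
    exact hdn.map g.injective
  · rw [List.head?_map, List.getLast?_map, hcyc]

theorem sum_w_le [DecidableEq V] {S : Finset (Finset V)} {t : Finset V}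
    (hsub : ∀ f ∈ S, f ⊆ t) (hcard : ∀ f ∈ S, 2 ≤ f.card)
    (hacyc : ¬ HasSimpleCycle S) (hne : S.Nonempty) :
    (∑ f ∈ S, (2 * f.card - 3)) + 3 ≤ 2 * t.card ∧
      ((∑ f ∈ S, (2 * f.card - 3)) + 3 = 2 * t.card → S = {t}) := by
  classical
  set p : V → Prop := (· ∈ t) with hp
  set St : Finset (Finset {x // x ∈ t}) := S.image (Finset.subtype p) with hSt
  have hmapback : ∀ f ∈ S, (f.subtype p).map (Function.Embedding.subtype p) = f := by
    intro f hf
    rw [Finset.subtype_map, Finset.filter_true_of_mem (fun x hx => hsub f hf hx)]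
  have hinj : Set.InjOn (Finset.subtype p) S := by
    intro f1 h1 f2 h2 heq
    rw [← hmapback f1 h1, ← hmapback f2 h2, heq]
  have hStcard : St.card = S.card := Finset.card_image_of_injOn hinj
  have hmap : ∀ eh ∈ St, eh.map (Function.Embedding.subtype p) ∈ S := by
    intro eh heh
    obtain ⟨f, hf, rfl⟩ := Finset.mem_image.1 heh
    rw [hmapback f hf]
    exact hf
  have hforest : ¬ HasSimpleCycle St := fun hc =>
    hacyc (cycle_map_emb (Function.Embedding.subtype p) hmap hc)
  have hacySt : Acyclic St := acyclic_of_forest hforest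
  have hcardsub : ∀ f ∈ S, (f.subtype p).card = f.card := by
    intro f hf
    rw [Finset.card_subtype, Finset.filter_true_of_mem (fun x hx => hsub f hf hx)]
  have hsum_eq : ∑ eh ∈ St, eh.card = ∑ f ∈ S, f.card := by
    rw [hSt, Finset.sum_image (fun x hx y hy h => hinj hx hy h)]
    exact Finset.sum_congr rfl (fun f hf => hcardsub f hf)
  have hSt_ne : ∀ eh ∈ St, eh.Nonempty := by
    intro eh heh
    obtain ⟨f, hf, rfl⟩ := Finset.mem_image.1 heh
    rw [← Finset.card_pos, hcardsub f hf]
    have := hcard f hf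
    omega
  have hcount := forest_count St.card St rfl hacySt hSt_ne
  rw [Fintype.card_coe] at hcount
  have hcomp1 : 1 ≤ (comp St).card := by
    obtain ⟨f, hf⟩ := hne
    have hfpos : (0:ℕ) < f.card := by have := hcard f hf; omega
    obtain ⟨x, hx⟩ := Finset.card_pos.1 hfpos
    exact Finset.card_pos.2 ⟨cls St ⟨x, hsub f hf hx⟩, cls_mem_comp _⟩
  have hterm : ∀ f ∈ S, (2 * f.card - 3) + 3 = 2 * f.card := by
    intro f hf
    have := hcard f hf
    omega
  have hsw : (∑ f ∈ S, (2 * f.card - 3)) + 3 * S.card = 2 * ∑ f ∈ S, f.card := by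
    have h1 : ∑ f ∈ S, ((2 * f.card - 3) + 3) = ∑ f ∈ S, 2 * f.card :=
      Finset.sum_congr rfl hterm
    rw [Finset.sum_add_distrib, Finset.sum_const, smul_eq_mul] at h1
    rw [Finset.mul_sum]
    omega
  have hS1 : 1 ≤ S.card := Finset.card_pos.2 hne
  rw [hsum_eq, hStcard] at hcount
  constructor
  · omega
  · intro heq
    have hScard1 : S.card = 1 := by omega
    obtain ⟨f, rfl⟩ := Finset.card_eq_one.1 hScard1
    have hff : f ∈ ({f} : Finset (Finset V)) := Finset.mem_singleton_self f
    have hft : f ⊆ t := hsub f hff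
    have hsumf : ∑ g ∈ ({f} : Finset (Finset V)), g.card = f.card := Finset.sum_singleton _ _
    have hcardeq : f.card = t.card := by
      rw [hsumf] at hcount
      rw [hScard1] at hcount
      have hc1 : (comp St).card = 1 := by
        rw [hsumf, hScard1] at hsw
        omega
      omega
    rw [Finset.eq_of_subset_of_card_le hft (le_of_eq hcardeq.symm)]

def fwt [DecidableEq V] (E : Finset (Finset V)) : ℕ := ∑ f ∈ E, (2 * f.card - 3)

theorem cycle_mono {E E' : Finset (Finset V)} (hsub : E' ⊆ E) (h : HasSimpleCycle E') :
    HasSimpleCycle E := by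
  obtain ⟨vs, es, hp, h1, h2, h3, h4⟩ := h
  exact ⟨vs, es, path_mono hsub hp, h1, h2, h3, h4⟩

theorem forest_mono [DecidableEq V] {E E' : Finset (Finset V)} (hsub : E' ⊆ E)
    (h : IsHyperforest E) : IsHyperforest E' :=
  ⟨fun e he => h.1 e (hsub he), fun hc => h.2 (cycle_mono hsub hc)⟩

theorem fwt_lt [DecidableEq V] {σ τ : Finset (Finset V)} (hσ : IsHyperforest σ)
    (hτ : IsHyperforest τ) (hle : ∀ e ∈ σ, ∃ f ∈ τ, e ⊆ f)
    (hnge : ¬ ∀ e ∈ τ, ∃ f ∈ σ, e ⊆ f) : fwt σ < fwt τ := by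
  classical
  set φ : Finset V → Finset V := fun e => if h : ∃ f ∈ τ, e ⊆ f then h.choose else ∅ with hφdef
  have hφ : ∀ e ∈ σ, φ e ∈ τ ∧ e ⊆ φ e := by
    intro e he
    have hex : ∃ f ∈ τ, e ⊆ f := hle e he
    simp only [hφdef, dif_pos hex]
    exact ⟨hex.choose_spec.1, hex.choose_spec.2⟩
  have hfib : ∑ t ∈ τ, ∑ e ∈ σ.filter (fun e => φ e = t), (2 * e.card - 3) = fwt σ :=
    Finset.sum_fiberwise_of_maps_to (fun e he => (hφ e he).1) _
  push_neg at hnge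
  obtain ⟨e₀, he₀, he₀'⟩ := hnge
  have hbound : ∀ t ∈ τ, (∑ e ∈ σ.filter (fun e => φ e = t), (2 * e.card - 3)) ≤
      2 * t.card - 3 := by
    intro t ht
    rcases Finset.eq_empty_or_nonempty (σ.filter (fun e => φ e = t)) with hF | hF
    · rw [hF, Finset.sum_empty]
      omega
    · have hsub' : ∀ f ∈ σ.filter (fun e => φ e = t), f ⊆ t := by
        intro f hf
        obtain ⟨hfσ, hft⟩ := Finset.mem_filter.1 hf
        exact hft ▸ (hφ f hfσ).2
      have := (sum_w_le hsub' (fun f hf => hσ.1 f (Finset.mem_of_mem_filter f hf))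
        (fun hc => hσ.2 (cycle_mono (Finset.filter_subset _ _) hc)) hF).1
      omega
  have hstrict : (∑ e ∈ σ.filter (fun e => φ e = e₀), (2 * e.card - 3)) <
      2 * e₀.card - 3 := by
    have he₀c := hτ.1 e₀ he₀
    rcases Finset.eq_empty_or_nonempty (σ.filter (fun e => φ e = e₀)) with hF | hF
    · rw [hF, Finset.sum_empty]
      omega
    · have hsub' : ∀ f ∈ σ.filter (fun e => φ e = e₀), f ⊆ e₀ := by
        intro f hf
        obtain ⟨hfσ, hft⟩ := Finset.mem_filter.1 hf
        exact hft ▸ (hφ f hfσ).2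
      obtain ⟨hle', heq'⟩ := sum_w_le hsub' (fun f hf => hσ.1 f (Finset.mem_of_mem_filter f hf))
        (fun hc => hσ.2 (cycle_mono (Finset.filter_subset _ _) hc)) hF
      by_contra hcon
      have heq2 : (∑ e ∈ σ.filter (fun e => φ e = e₀), (2 * e.card - 3)) + 3 =
          2 * e₀.card := by omega
      have := heq' heq2
      have he₀σ : e₀ ∈ σ := by
        have : e₀ ∈ σ.filter (fun e => φ e = e₀) := this ▸ Finset.mem_singleton_self e₀
        exact Finset.mem_of_mem_filter e₀ this
      exact he₀' e₀ he₀σ subset_rfl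
  calc fwt σ = ∑ t ∈ τ, ∑ e ∈ σ.filter (fun e => φ e = t), (2 * e.card - 3) := hfib.symm
    _ < ∑ t ∈ τ, (2 * t.card - 3) := Finset.sum_lt_sum hbound ⟨e₀, he₀, hstrict⟩
    _ = fwt τ := rfl

theorem descent [DecidableEq V] {τ : Finset (Finset V)} (hτ : IsHyperforest τ)
    (hpos : 0 < fwt τ) :
    ∃ σ : Finset (Finset V), IsHyperforest σ ∧ (∀ e ∈ σ, ∃ f ∈ τ, e ⊆ f) ∧
      ¬ (∀ e ∈ τ, ∃ f ∈ σ, e ⊆ f) ∧ fwt σ + 1 = fwt τ := by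
  classical
  have hAcy : Acyclic τ := acyclic_of_forest hτ.2
  have hτne : τ.Nonempty := by
    rcases Finset.eq_empty_or_nonempty τ with rfl | h
    · simp [fwt] at hpos
    · exact h
  by_cases hex : ∃ e ∈ τ, e.card = 2
  · obtain ⟨e, he, hec⟩ := hex
    refine ⟨τ.erase e, forest_mono (Finset.erase_subset e τ) hτ, ?_, ?_, ?_⟩
    · intro f hf
      exact ⟨f, Finset.mem_of_mem_erase hf, subset_rfl⟩
    · intro hge
      obtain ⟨g, hg, hsub⟩ := hge e he
      obtain ⟨a, b, hab, rfl⟩ := Finset.card_eq_two.1 hec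
      exact hAcy _ he a b (by simp) (by simp) hab
        (reach_edge hg (hsub (by simp)) (hsub (by simp)))
    · have h3 : ∑ f ∈ τ.erase e, (2 * f.card - 3) + (2 * e.card - 3) =
          ∑ f ∈ τ, (2 * f.card - 3) := Finset.sum_erase_add τ _ he
      unfold fwt
      omega
  · push_neg at hex
    obtain ⟨e, he⟩ := hτne
    have hec : 3 ≤ e.card := by
      have h1 := hτ.1 e he
      have h2 := hex e he
      omega
    obtain ⟨x, hx⟩ : e.Nonempty := Finset.card_pos.1 (by omega)
    obtain ⟨y, hy⟩ : (e.erase x).Nonempty := Finset.card_pos.1 (by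
      rw [Finset.card_erase_of_mem hx]; omega)
    have hyx : y ≠ x := Finset.ne_of_mem_erase hy
    have hye : y ∈ e := Finset.mem_of_mem_erase hy
    set E₀ := τ.erase e with hE₀
    set e1 : Finset V := {x, y} with he1
    set e2 : Finset V := e.erase x with he2
    have he1x : x ∈ e1 := by simp [he1]
    have he1y : y ∈ e1 := by simp [he1]
    have he1card : e1.card = 2 := Finset.card_pair (Ne.symm hyx)
    have he2card : e2.card = e.card - 1 := Finset.card_erase_of_mem hx
    have he2sub : e2 ⊆ e := Finset.erase_subset x e
    have he1sub : e1 ⊆ e := by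
      intro z hz
      rcases Finset.mem_insert.1 hz with rfl | hz
      · exact hx
      · rw [Finset.mem_singleton.1 hz]; exact hye
    -- e1 ∉ E₀
    have hne1 : e1 ∉ E₀ := by
      intro hmem
      exact hAcy e he x y hx hye (Ne.symm hyx) (reach_edge hmem he1x he1y)
    have hne2 : e2 ∉ E₀ := by
      intro hmem
      obtain ⟨a, ha, b, hb, hab⟩ := Finset.one_lt_card.1 (show 1 < e2.card by omega)
      exact hAcy e he a b (he2sub ha) (he2sub hb) hab (reach_edge hmem ha hb)
    have he12 : e1 ≠ e2 := by
      intro h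
      have : x ∈ e2 := h ▸ he1x
      exact Finset.notMem_erase x e this
    set σ := insert e1 (insert e2 E₀) with hσdef
    have hne1' : e1 ∉ insert e2 E₀ := by
      simp only [Finset.mem_insert]
      push_neg
      exact ⟨he12, hne1⟩
    -- erase computations
    have herase1 : σ.erase e1 = insert e2 E₀ := Finset.erase_insert hne1'
    have herase2 : σ.erase e2 = insert e1 E₀ := by
      rw [hσdef, Finset.erase_insert_of_ne he12, Finset.erase_insert hne2]
    have hAσ : Acyclic σ := by
      intro g hg u v hu hv huv hr
      rcases Finset.mem_insert.1 hg with rfl | hg'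
      · -- g = e1
        rw [herase1] at hr
        have hxyreach : Reachable (insert e2 E₀) x y := by
          rcases Finset.mem_insert.1 hu with rfl | hu' <;>
            rcases Finset.mem_insert.1 hv with rfl | hv'
          · exact absurd rfl huv
          · rw [Finset.mem_singleton.1 hv'] at hr
            exact hr
          · rw [Finset.mem_singleton.1 hu'] at hr
            exact reach_symm hr
          · rw [Finset.mem_singleton.1 hu', Finset.mem_singleton.1 hv'] at huv
            exact absurd rfl huv
        rcases reach_insert_iff.1 hxyreach with h' | ⟨⟨a, ha, hxa⟩, _⟩
        · exact hAcy e he x y hx hye (Ne.symm hyx) h'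
        · have hae : a ∈ e := he2sub ha
          have hax : a ≠ x := Finset.ne_of_mem_erase ha
          exact hAcy e he x a hx hae (Ne.symm hax) hxa
      rcases Finset.mem_insert.1 hg' with rfl | hg'' 
      · -- g = e2
        rw [herase2] at hr
        have hue : u ∈ e := he2sub hu
        have hve : v ∈ e := he2sub hv
        have key : ∀ z, z ∈ e2 → ∀ c ∈ e1, Reachable E₀ z c → Reachable E₀ z y := by
          intro z hz c hc hzc
          rcases Finset.mem_insert.1 hc with rfl | hc'
          · exact absurd hzc (hAcy e he z c (he2sub hz) hx (Finset.ne_of_mem_erase hz))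
          · rw [Finset.mem_singleton.1 hc'] at hzc
            exact hzc
        rcases reach_insert_iff.1 hr with h' | ⟨⟨a, ha, hua⟩, ⟨b, hb, hvb⟩⟩
        · exact hAcy e he u v hue hve huv h'
        · have h1 : Reachable E₀ u y := key u hu a ha hua
          have h2 : Reachable E₀ v y := key v hv b hb hvb
          exact hAcy e he u v hue hve huv (reach_trans h1 (reach_symm h2))
      · -- g ∈ E₀ : old edge
        have hgτ : g ∈ τ := Finset.mem_of_mem_erase hg''
        have hge : g ≠ e := Finset.ne_of_mem_erase hg''
        have hmono : ∀ f ∈ σ.erase g, ∃ f' ∈ τ.erase g, f ⊆ f' := by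
          intro f hf
          have hfσ : f ∈ σ := Finset.mem_of_mem_erase hf
          have hfg : f ≠ g := Finset.ne_of_mem_erase hf
          rcases Finset.mem_insert.1 hfσ with rfl | hf'
          · exact ⟨e, Finset.mem_erase.2 ⟨Ne.symm hge, he⟩, he1sub⟩
          rcases Finset.mem_insert.1 hf' with rfl | hf''
          · exact ⟨e, Finset.mem_erase.2 ⟨Ne.symm hge, he⟩, he2sub⟩
          · exact ⟨f, Finset.mem_erase.2 ⟨hfg, Finset.mem_of_mem_erase hf''⟩, subset_rfl⟩
        exact hAcy g hgτ u v hu hv huv (reach_mono hmono hr)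
    refine ⟨σ, ⟨?_, no_cycle_of_acyclic hAσ⟩, ?_, ?_, ?_⟩
    · intro f hf
      rcases Finset.mem_insert.1 hf with rfl | hf'
      · omega
      rcases Finset.mem_insert.1 hf' with rfl | hf''
      · omega
      · exact hτ.1 f (Finset.mem_of_mem_erase hf'')
    · intro f hf
      rcases Finset.mem_insert.1 hf with rfl | hf'
      · exact ⟨e, he, he1sub⟩
      rcases Finset.mem_insert.1 hf' with rfl | hf''
      · exact ⟨e, he, he2sub⟩
      · exact ⟨f, Finset.mem_of_mem_erase hf'', subset_rfl⟩
    · intro hge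
      obtain ⟨g, hg, hsub⟩ := hge e he
      rcases Finset.mem_insert.1 hg with rfl | hg'
      · have := Finset.card_le_card hsub
        omega
      rcases Finset.mem_insert.1 hg' with rfl | hg''
      · exact Finset.notMem_erase x e (hsub hx)
      · obtain ⟨a, ha, b, hb, hab⟩ := Finset.one_lt_card.1 (show 1 < e.card by omega)
        have hge' : g ≠ e := Finset.ne_of_mem_erase hg''
        exact hAcy e he a b ha hb hab (reach_edge hg'' (hsub ha) (hsub hb))
    · have hsum1 : fwt σ = (2 * e1.card - 3) + ((2 * e2.card - 3) + fwt E₀) := by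
        rw [hσdef, fwt, Finset.sum_insert hne1', Finset.sum_insert hne2]
        rfl
      have hsum2 : fwt E₀ + (2 * e.card - 3) = fwt τ := Finset.sum_erase_add τ _ he
      rw [hsum1, he1card, he2card]
      omega
end HF

namespace HF
variable {V : Type*}

theorem height_eq_fwt [Fintype V] [DecidableEq V]
    (τ : {E : Finset (Finset V) // IsHyperforest E}) :
    Order.height τ = (fwt τ.1 : ℕ∞) := by
  have hF : StrictMono (fun σ : {E : Finset (Finset V) // IsHyperforest E} => fwt σ.1) := by
    intro σ₁ σ₂ h
    exact fwt_lt σ₁.2 σ₂.2 h.1 h.2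
  have hub : ∀ σ : {E : Finset (Finset V) // IsHyperforest E},
      Order.height σ ≤ (fwt σ.1 : ℕ∞) := by
    intro σ
    have := Order.height_le_height_apply_of_strictMono _ hF σ
    rwa [Order.height_nat] at this
  have hlb : ∀ (n : ℕ) (σ : {E : Finset (Finset V) // IsHyperforest E}), fwt σ.1 = n →
      (n : ℕ∞) ≤ Order.height σ := by
    intro n
    induction n with
    | zero => intro σ _; simp
    | succ n IH =>
      intro σ hn
      obtain ⟨ρ, hρ, hle, hnge, hsum⟩ := descent σ.2 (by omega)
      have hlt : @LT.lt {E : Finset (Finset V) // IsHyperforest E} Preorder.toLT ⟨ρ, hρ⟩ σ :=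
        ⟨hle, hnge⟩
      have h1 : (n : ℕ∞) ≤ Order.height (⟨ρ, hρ⟩ : {E : Finset (Finset V) // IsHyperforest E}) :=
        IH ⟨ρ, hρ⟩ (by show fwt ρ = n; omega)
      have hfin : Order.height (⟨ρ, hρ⟩ : {E : Finset (Finset V) // IsHyperforest E}) < ⊤ :=
        lt_of_le_of_lt (hub _) (ENat.coe_lt_top _)
      have h2 := Order.height_strictMono hlt hfin
      have h3 : (n : ℕ∞) < Order.height σ := lt_of_le_of_lt h1 h2
      have h4 := (ENat.add_one_le_iff (ENat.coe_ne_top n)).2 h3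
      have h5 : ((n + 1 : ℕ) : ℕ∞) = (n : ℕ∞) + 1 := by push_cast; rfl
      rw [h5]
      exact h4
  exact le_antisymm (hub τ) (hlb _ τ rfl)

theorem fwt_eq [Fintype V] [DecidableEq V] {E : Finset (Finset V)} (hE : IsHyperforest E) :
    fwt E = 2 * Fintype.card V - E.card - 2 * Nat.card (Quot (Reachable E)) := by
  have hacyc := acyclic_of_forest hE.2
  have hne : ∀ e ∈ E, e.Nonempty := fun e he => Finset.card_pos.1 (by
    have := hE.1 e he; omega)
  have hcount := forest_count E.card E rfl hacyc hne
  have hq := card_quot_eq_comp E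
  have hterm : ∀ f ∈ E, (2 * f.card - 3) + 3 = 2 * f.card := fun f hf => by
    have := hE.1 f hf; omega
  have hsw : fwt E + 3 * E.card = 2 * ∑ f ∈ E, f.card := by
    have h1 : ∑ f ∈ E, ((2 * f.card - 3) + 3) = ∑ f ∈ E, 2 * f.card :=
      Finset.sum_congr rfl hterm
    rw [Finset.sum_add_distrib, Finset.sum_const, smul_eq_mul] at h1
    rw [Finset.mul_sum]
    unfold fwt
    omega
  omega

end HF

/-- The height of a hyperforest τ in the hyperforest poset is 2|V| − |E| − 2|C|, where C is
the set of connected components; in particular a hypertree on n+1 vertices with k hyperedges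
has height 2n − k. -/
theorem stmt3 {V : Type*} [Fintype V] [DecidableEq V]
    (τ : {E : Finset (Finset V) // IsHyperforest E}) :
    Order.height τ =
      ((2 * Fintype.card V - τ.1.card - 2 * Nat.card (Quot (Reachable τ.1)) : ℕ) : ℕ∞) ∧
    ∀ n k : ℕ, Connected τ.1 → Fintype.card V = n + 1 → τ.1.card = k →
      Order.height τ = ((2 * n - k : ℕ) : ℕ∞) := by
  have h1 := HF.height_eq_fwt τ
  have h2 := HF.fwt_eq τ.2
  constructor
  · rw [h1]
    exact_mod_cast congrArg (Nat.cast : ℕ → ℕ∞) h2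
  · intro n k hconn hV hk
    have hcard1 : Nat.card (Quot (Reachable τ.1)) = 1 := by
      have hnz : 0 < Fintype.card V := by omega
      have hne : Nonempty V := Fintype.card_pos_iff.1 hnz
      obtain ⟨v⟩ := hne
      rw [Nat.card_eq_one_iff_unique]
      constructor
      · constructor
        intro a b
        induction a using Quot.ind with | _ a =>
        induction b using Quot.ind with | _ b =>
        exact Quot.sound (hconn a b)
      · exact ⟨Quot.mk _ v⟩
    rw [hV, hk, hcard1] at h2
    have h3 : HF.fwt τ.1 = 2 * n - k := by omega
    rw [h1, h3]
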